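/- Let H be a hypergraph and {A, B} a bipartition of its edge set whose border δ({A,B}) is contained in some bag of an optimal tree-decomposition of H. Then tw(H) = max(tw(H/A), tw(H/B)). -/

import Mathlib

open Set
open scoped Classical

universe u
variable {V : Type u}

/-- Border of an edge-subset `A` of edge set `E`: vertices incident with an
edge of `A` and with an edge of `E \ A`. -/
def border (E A : Set (Set V)) : Set V :=
  {v | (∃ e ∈ E ∩ A, v ∈ e) ∧ ∃ e ∈ E \ A, v ∈ e}

/-- A tree-decomposition of the hypergraph with vertex set `Vs` and edge set `E`. -/
structure TreeDecomp (Vs : Set V) (E : Set (Set V)) : Type (u + 1) where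
  ι : Type
  T : SimpleGraph ι
  isTree : T.IsTree
  bag : ι → Set V
  cover_vertex : ∀ v ∈ Vs, ∃ i, v ∈ bag i
  cover_edge : ∀ e ∈ E, ∃ i, e ⊆ bag i
  bag_conn : ∀ v : V, {i | v ∈ bag i}.Nonempty → (T.induce {i | v ∈ bag i}).Connected

noncomputable def TreeDecomp.width {Vs : Set V} {E : Set (Set V)}
    (d : TreeDecomp Vs E) : ℕ∞ :=
  ⨆ i, ((d.bag i).encard - 1)

/-- Tree-width of a hypergraph. -/
noncomputable def tw (Vs : Set V) (E : Set (Set V)) : ℕ∞ :=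
  ⨅ d : TreeDecomp Vs E, d.width

/-- Connectivity by a chain of edges. -/
def hconn (E : Set (Set V)) (u w : V) : Prop :=
  Relation.ReflTransGen (fun a b => ∃ e ∈ E, a ∈ e ∧ b ∈ e) u w

/-- An edge set is connected if its sub-hypergraph is connected. -/
def EdgeConnected (X : Set (Set V)) : Prop :=
  ∀ u ∈ ⋃₀ X, ∀ w ∈ ⋃₀ X, hconn X u w

/-- Edges of `H - S`: nonempty traces `e \ S`. -/
def edgesMinus (E : Set (Set V)) (S : Set V) : Set (Set V) :=
  {x | ∃ e ∈ E, (e \ S).Nonempty ∧ x = e \ S}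

/-- `C` is a connected component of the hypergraph with vertex set `W` and edges `E'`. -/
def IsConnCompOf (W : Set V) (E' : Set (Set V)) (C : Set V) : Prop :=
  ∃ u ∈ W, C = {w ∈ W | hconn E' u w}

/-- `e` is a cut-edge of the hypergraph with edge set `E`. -/
def IsCutEdge (E : Set (Set V)) (e : Set V) : Prop :=
  e ∈ E ∧ ∃ u ∈ ⋃₀ (E \ {e}), ∃ w ∈ ⋃₀ (E \ {e}), ¬ hconn (E \ {e}) u w

/-- Edge set of `H/A`: the edges of `A` replaced by one hyperedge on the border. -/
def contractE (E A : Set (Set V)) : Set (Set V) := (E \ A) ∪ {border E A}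

/-- Vertex set of `H/A`. -/
def contractV (Vs : Set V) (E A : Set (Set V)) : Set V := (Vs \ ⋃₀ A) ∪ border E A

/-- An `S`-bridge: a minimal nonempty edge set whose border lies in `S`. -/
def IsSBridge (E : Set (Set V)) (S : Set V) (X : Set (Set V)) : Prop :=
  X.Nonempty ∧ X ⊆ E ∧ border E X ⊆ S ∧
    ∀ Y : Set (Set V), Y.Nonempty → Y ⊆ X → border E Y ⊆ S → Y = X

/-- A p-tree of the hypergraph with edge set `E`: a tree whose internal nodes
have degree 3 and whose leaves are labelled bijectively with the edges. -/
structure PTree (E : Set (Set V)) : Type (u + 1) where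
  ι : Type
  T : SimpleGraph ι
  isTree : T.IsTree
  leafLabel : {i : ι // (T.neighborSet i).ncard = 1} ≃ E
  deg : ∀ i : ι, (T.neighborSet i).ncard = 1 ∨ (T.neighborSet i).ncard = 3

/-- The bag at a node of a p-tree: a leaf gets its edge; an internal node gets
the border of the tripartition of the edges, i.e. all vertices lying on two
edges whose leaves are separated by the node. -/
noncomputable def PTree.bag {E : Set (Set V)} (P : PTree E) (i : P.ι) : Set V :=
  if h : (P.T.neighborSet i).ncard = 1 then (P.leafLabel ⟨i, h⟩ : Set V)
  else {u | ∃ l1 l2 : {j : P.ι // (P.T.neighborSet j).ncard = 1},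
    u ∈ (P.leafLabel l1 : Set V) ∧ u ∈ (P.leafLabel l2 : Set V) ∧
    ∀ p : P.T.Walk l1.1 l2.1, i ∈ p.support}

noncomputable def PTree.width {E : Set (Set V)} (P : PTree E) : ℕ∞ :=
  ⨆ i, ((P.bag i).encard - 1)

/-- The part of the edge tripartition at node `i` lying on the side of `l`. -/
def PTree.sideOf {E : Set (Set V)} (P : PTree E) (i l : P.ι) : Set (Set V) :=
  {e | ∃ h : e ∈ E, ∃ p : P.T.Walk (P.leafLabel.symm ⟨e, h⟩).1 l, i ∉ p.support}

def PTree.IsPartAt {E : Set (Set V)} (P : PTree E) (i : P.ι) (X : Set (Set V)) : Prop :=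
  ∃ l, P.T.Adj i l ∧ X = P.sideOf i l

-- AUX

lemma border_diff (E A : Set (Set V)) : border E (E \ A) = border E A := by
  ext v
  constructor
  · rintro ⟨⟨e, he, hv⟩, f, hf, hv'⟩
    refine ⟨⟨f, ⟨hf.1, ?_⟩, hv'⟩, ⟨e, he.2, hv⟩⟩
    by_contra h
    exact hf.2 ⟨hf.1, h⟩
  · rintro ⟨⟨e, he, hv⟩, f, hf, hv'⟩
    exact ⟨⟨f, ⟨hf.1, hf⟩, hv'⟩, ⟨e, ⟨he.1, fun h => h.2 he.2⟩, hv⟩⟩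

lemma border_subset_vs {Vs : Set V} {E : Set (Set V)} (A : Set (Set V))
    (hE : ∀ e ∈ E, e ⊆ Vs) : border E A ⊆ Vs := by
  rintro v ⟨⟨e, he, hv⟩, -⟩
  exact hE e he.1 hv

noncomputable def contractDecomp {Vs : Set V} {E : Set (Set V)} (A : Set (Set V))
    (hE : ∀ e ∈ E, e ⊆ Vs) (d : TreeDecomp Vs E) (i0 : d.ι)
    (hb : border E A ⊆ d.bag i0) : TreeDecomp (contractV Vs E A) (contractE E A) where
  ι := d.ι
  T := d.T
  isTree := d.isTree
  bag := d.bag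
  cover_vertex := by
    rintro v (hv | hv)
    · exact d.cover_vertex v hv.1
    · exact d.cover_vertex v (border_subset_vs A hE hv)
  cover_edge := by
    rintro e (he | he)
    · exact d.cover_edge e he.1
    · exact ⟨i0, by rw [mem_singleton_iff] at he; rw [he]; exact hb⟩
  bag_conn := d.bag_conn

lemma contractDecomp_width {Vs : Set V} {E : Set (Set V)} (A : Set (Set V))
    (hE : ∀ e ∈ E, e ⊆ Vs) (d : TreeDecomp Vs E) (i0 : d.ι)
    (hb : border E A ⊆ d.bag i0) :
    (contractDecomp A hE d i0 hb).width = d.width := rfl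

lemma enat_exists_eq_iInf {ι : Type*} [Nonempty ι] (f : ι → ℕ∞) :
    ∃ x, f x = ⨅ y, f y := by
  obtain ⟨-, ⟨x, rfl⟩, hmin⟩ :=
    (wellFounded_lt (α := ℕ∞)).has_min (Set.range f) (Set.range_nonempty f)
  exact ⟨x, le_antisymm (le_iInf fun y => not_lt.mp (hmin _ ⟨y, rfl⟩)) (iInf_le _ x)⟩

section Glue2

namespace GlueAux

variable {ι₁ ι₂ : Type} (T1 : SimpleGraph ι₁) (T2 : SimpleGraph ι₂) (i1 : ι₁) (i2 : ι₂)

def glueAdj : ι₁ ⊕ ι₂ → ι₁ ⊕ ι₂ → Prop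
  | .inl a, .inl b => T1.Adj a b
  | .inr a, .inr b => T2.Adj a b
  | .inl a, .inr b => a = i1 ∧ b = i2
  | .inr a, .inl b => b = i1 ∧ a = i2

def glue : SimpleGraph (ι₁ ⊕ ι₂) where
  Adj := glueAdj T1 T2 i1 i2
  symm := by
    constructor
    rintro (a|a) (b|b) h
    · exact h.symm
    · exact ⟨h.1, h.2⟩
    · exact ⟨h.1, h.2⟩
    · exact h.symm
  loopless := by
    constructor
    rintro (a|a) h
    · exact T1.loopless.irrefl a h
    · exact T2.loopless.irrefl a h

def glueInl : T1 →g glue T1 T2 i1 i2 := ⟨Sum.inl, fun h => h⟩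
def glueInr : T2 →g glue T1 T2 i1 i2 := ⟨Sum.inr, fun h => h⟩

lemma glue_adj_cross : (glue T1 T2 i1 i2).Adj (Sum.inl i1) (Sum.inr i2) := ⟨rfl, rfl⟩

lemma glue_connected (h1 : T1.Connected) (h2 : T2.Connected) :
    (glue T1 T2 i1 i2).Connected := by
  have hr1 : ∀ a b : ι₁, (glue T1 T2 i1 i2).Reachable (Sum.inl a) (Sum.inl b) :=
    fun a b => (h1.preconnected a b).map (glueInl T1 T2 i1 i2)
  have hr2 : ∀ a b : ι₂, (glue T1 T2 i1 i2).Reachable (Sum.inr a) (Sum.inr b) :=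
    fun a b => (h2.preconnected a b).map (glueInr T1 T2 i1 i2)
  have hc : (glue T1 T2 i1 i2).Reachable (Sum.inl i1) (Sum.inr i2) :=
    (glue_adj_cross T1 T2 i1 i2).reachable
  rw [SimpleGraph.connected_iff]
  refine ⟨?_, ⟨Sum.inl i1⟩⟩
  rintro (a|a) (b|b)
  · exact hr1 a b
  · exact ((hr1 a i1).trans hc).trans (hr2 i2 b)
  · exact ((hr2 a i2).trans hc.symm).trans (hr1 i1 b)
  · exact hr2 a b

variable {T1 T2 i1 i2}

/-- Lift walks in the glued graph between left vertices to walks in `T1`. -/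
lemma lift_left : ∀ (n : ℕ) (x y : ι₁ ⊕ ι₂) (p : (glue T1 T2 i1 i2).Walk x y),
    p.length = n →
    (∀ a b : ι₁, x = Sum.inl a → y = Sum.inl b →
      ∃ q : T1.Walk a b, ∀ e ∈ q.edges, Sym2.map Sum.inl e ∈ p.edges) ∧
    (∀ (a : ι₂) (b : ι₁), x = Sum.inr a → y = Sum.inl b →
      ∃ q : T1.Walk i1 b, ∀ e ∈ q.edges, Sym2.map Sum.inl e ∈ p.edges) := by
  intro n
  induction n using Nat.strong_induction_on with
  | _ n IH =>
    intro x y p hlen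
    cases p with
    | nil =>
      constructor
      · rintro a b rfl h
        cases Sum.inl_injective h.symm
        exact ⟨SimpleGraph.Walk.nil, by simp⟩
      · rintro a b rfl h
        exact absurd h (by simp)
    | @cons _ c _ h q =>
      subst hlen
      have hql : q.length < (SimpleGraph.Walk.cons h q).length := by
        simp [SimpleGraph.Walk.length_cons]
      constructor
      · rintro a b rfl rfl
        cases c with
        | inl c =>
          obtain ⟨q', hq'⟩ := ((IH _ hql _ _ q rfl).1 c b rfl rfl)
          refine ⟨SimpleGraph.Walk.cons (show _ from h) q', ?_⟩
          intro e he
          rw [SimpleGraph.Walk.edges_cons] at he ⊢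
          rcases List.mem_cons.mp he with rfl | he
          · exact List.mem_cons.mpr (Or.inl (by simp))
          · exact List.mem_cons.mpr (Or.inr (hq' e he))
        | inr c =>
          obtain ⟨rfl, rfl⟩ := h
          obtain ⟨q', hq'⟩ := ((IH _ hql _ _ q rfl).2 c b rfl rfl)
          exact ⟨q', fun e he => List.mem_cons.mpr (Or.inr (hq' e he))⟩
      · rintro a b rfl rfl
        cases c with
        | inl c =>
          obtain ⟨rfl, rfl⟩ := h
          obtain ⟨q', hq'⟩ := ((IH _ hql _ _ q rfl).1 c b rfl rfl)
          exact ⟨q', fun e he => List.mem_cons.mpr (Or.inr (hq' e he))⟩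
        | inr c =>
          obtain ⟨q', hq'⟩ := ((IH _ hql _ _ q rfl).2 c b rfl rfl)
          exact ⟨q', fun e he => List.mem_cons.mpr (Or.inr (hq' e he))⟩

/-- Lift walks in the glued graph between right vertices to walks in `T2`. -/
lemma lift_right : ∀ (n : ℕ) (x y : ι₁ ⊕ ι₂) (p : (glue T1 T2 i1 i2).Walk x y),
    p.length = n →
    (∀ a b : ι₂, x = Sum.inr a → y = Sum.inr b →
      ∃ q : T2.Walk a b, ∀ e ∈ q.edges, Sym2.map Sum.inr e ∈ p.edges) ∧
    (∀ (a : ι₁) (b : ι₂), x = Sum.inl a → y = Sum.inr b →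
      ∃ q : T2.Walk i2 b, ∀ e ∈ q.edges, Sym2.map Sum.inr e ∈ p.edges) := by
  intro n
  induction n using Nat.strong_induction_on with
  | _ n IH =>
    intro x y p hlen
    cases p with
    | nil =>
      constructor
      · rintro a b rfl h
        cases Sum.inr_injective h.symm
        exact ⟨SimpleGraph.Walk.nil, by simp⟩
      · rintro a b rfl h
        exact absurd h (by simp)
    | @cons _ c _ h q =>
      subst hlen
      have hql : q.length < (SimpleGraph.Walk.cons h q).length := by
        simp [SimpleGraph.Walk.length_cons]
      constructor
      · rintro a b rfl rfl
        cases c with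
        | inr c =>
          obtain ⟨q', hq'⟩ := ((IH _ hql _ _ q rfl).1 c b rfl rfl)
          refine ⟨SimpleGraph.Walk.cons (show _ from h) q', ?_⟩
          intro e he
          rw [SimpleGraph.Walk.edges_cons] at he ⊢
          rcases List.mem_cons.mp he with rfl | he
          · exact List.mem_cons.mpr (Or.inl (by simp))
          · exact List.mem_cons.mpr (Or.inr (hq' e he))
        | inl c =>
          obtain ⟨rfl, rfl⟩ := h
          obtain ⟨q', hq'⟩ := ((IH _ hql _ _ q rfl).2 c b rfl rfl)
          exact ⟨q', fun e he => List.mem_cons.mpr (Or.inr (hq' e he))⟩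
      · rintro a b rfl rfl
        cases c with
        | inr c =>
          obtain ⟨rfl, rfl⟩ := h
          obtain ⟨q', hq'⟩ := ((IH _ hql _ _ q rfl).1 c b rfl rfl)
          exact ⟨q', fun e he => List.mem_cons.mpr (Or.inr (hq' e he))⟩
        | inl c =>
          obtain ⟨q', hq'⟩ := ((IH _ hql _ _ q rfl).2 c b rfl rfl)
          exact ⟨q', fun e he => List.mem_cons.mpr (Or.inr (hq' e he))⟩

/-- Every walk from a left vertex to a right vertex uses the cross edge. -/
lemma cross_mem : ∀ (n : ℕ) (x y : ι₁ ⊕ ι₂) (p : (glue T1 T2 i1 i2).Walk x y),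
    p.length = n → ∀ (a : ι₁) (b : ι₂), x = Sum.inl a → y = Sum.inr b →
      s(Sum.inl i1, (Sum.inr i2 : ι₁ ⊕ ι₂)) ∈ p.edges := by
  intro n
  induction n using Nat.strong_induction_on with
  | _ n IH =>
    intro x y p hlen
    cases p with
    | nil =>
      rintro a b rfl h
      exact absurd h (by simp)
    | @cons _ c _ h q =>
      subst hlen
      have hql : q.length < (SimpleGraph.Walk.cons h q).length := by
        simp [SimpleGraph.Walk.length_cons]
      rintro a b rfl rfl
      cases c with
      | inl c =>
        exact List.mem_cons.mpr (Or.inr (IH _ hql _ _ q rfl c b rfl rfl))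
      | inr c =>
        obtain ⟨rfl, rfl⟩ := h
        exact List.mem_cons.mpr (Or.inl rfl)

lemma glue_isTree (h1 : T1.IsTree) (h2 : T2.IsTree) : (glue T1 T2 i1 i2).IsTree := by
  constructor
  · exact glue_connected T1 T2 i1 i2 h1.isConnected h2.isConnected
  · rw [SimpleGraph.isAcyclic_iff_forall_adj_isBridge]
    have hb1 := SimpleGraph.isAcyclic_iff_forall_adj_isBridge.mp h1.IsAcyclic
    have hb2 := SimpleGraph.isAcyclic_iff_forall_adj_isBridge.mp h2.IsAcyclic
    rintro (a|a) (b|b) hadj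
    · rw [SimpleGraph.isBridge_iff_adj_and_forall_walk_mem_edges]
      intro p
      obtain ⟨q, hq⟩ := (lift_left p.length _ _ p rfl).1 a b rfl rfl
      have hmem := (SimpleGraph.isBridge_iff_adj_and_forall_walk_mem_edges.mp (hb1 hadj)) q
      have := hq _ hmem
      simpa using this
    · obtain ⟨rfl, rfl⟩ := hadj
      rw [SimpleGraph.isBridge_iff_adj_and_forall_walk_mem_edges]
      exact fun p => cross_mem p.length _ _ p rfl a b rfl rfl
    · obtain ⟨rfl, rfl⟩ := hadj
      rw [Sym2.eq_swap, SimpleGraph.isBridge_iff_adj_and_forall_walk_mem_edges]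
      exact fun p => cross_mem p.length _ _ p rfl b a rfl rfl
    · rw [SimpleGraph.isBridge_iff_adj_and_forall_walk_mem_edges]
      intro p
      obtain ⟨q, hq⟩ := (lift_right p.length _ _ p rfl).1 a b rfl rfl
      have hmem := (SimpleGraph.isBridge_iff_adj_and_forall_walk_mem_edges.mp (hb2 hadj)) q
      have := hq _ hmem
      simpa using this

end GlueAux

variable {Vs : Set V} {E A : Set (Set V)}

lemma exists_glueDecomp (hE : ∀ e ∈ E, e ⊆ Vs) (hA : A ⊆ E)
    (d1 : TreeDecomp (contractV Vs E A) (contractE E A))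
    (d2 : TreeDecomp (contractV Vs E (E \ A)) (contractE E (E \ A))) :
    ∃ D : TreeDecomp Vs E, D.width ≤ max d1.width d2.width := by
  classical
  set X2 : Set V := ⋃₀ A ∪ border E A with hX2def
  obtain ⟨i1, hb1⟩ := d1.cover_edge (border E A) (Or.inr rfl)
  obtain ⟨i2, hb2'⟩ := d2.cover_edge (border E (E \ A)) (Or.inr rfl)
  rw [border_diff] at hb2'
  have hbX1 : border E A ⊆ (contractV Vs E A) := subset_union_right
  have hbX2 : border E A ⊆ X2 := subset_union_right
  have hX12 : (contractV Vs E A) ∩ X2 ⊆ border E A := by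
    rintro v ⟨h1 | h1, h2 | h2⟩
    · exact absurd h2 h1.2
    · exact h2
    · exact h1
    · exact h2
  have hedgeB : ∀ e ∈ E \ A, e ⊆ (contractV Vs E A) := by
    intro e he u hu
    by_cases huA : u ∈ ⋃₀ A
    · obtain ⟨f, hf, huf⟩ := huA
      exact Or.inr ⟨⟨f, ⟨hA hf, hf⟩, huf⟩, ⟨e, he, hu⟩⟩
    · exact Or.inl ⟨hE e he.1 hu, huA⟩
  have hedgeA : ∀ e ∈ A, e ⊆ X2 := fun e he u hu => Or.inl ⟨e, he, hu⟩
  refine ⟨{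
    ι := d1.ι ⊕ d2.ι
    T := GlueAux.glue d1.T d2.T i1 i2
    isTree := GlueAux.glue_isTree d1.isTree d2.isTree
    bag := Sum.elim (fun i => d1.bag i ∩ (contractV Vs E A)) (fun j => d2.bag j ∩ X2)
    cover_vertex := ?_
    cover_edge := ?_
    bag_conn := ?_ }, ?_⟩
  · intro v hv
    by_cases hvA : v ∈ ⋃₀ A
    · by_cases hvB : v ∈ ⋃₀ (E \ A)
      · have hvb : v ∈ border E A := by
          obtain ⟨e, he, hve⟩ := hvA
          obtain ⟨f, hf, hvf⟩ := hvB
          exact ⟨⟨e, ⟨hA he, he⟩, hve⟩, ⟨f, hf, hvf⟩⟩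
        exact ⟨Sum.inl i1, ⟨hb1 hvb, hbX1 hvb⟩⟩
      · obtain ⟨j, hj⟩ := d2.cover_vertex v (Or.inl ⟨hv, hvB⟩)
        exact ⟨Sum.inr j, ⟨hj, Or.inl hvA⟩⟩
    · obtain ⟨i, hi⟩ := d1.cover_vertex v (Or.inl ⟨hv, hvA⟩)
      exact ⟨Sum.inl i, ⟨hi, Or.inl ⟨hv, hvA⟩⟩⟩
  · intro e he
    by_cases heA : e ∈ A
    · obtain ⟨j, hj⟩ := d2.cover_edge e (Or.inl ⟨hA heA, fun h => h.2 heA⟩)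
      exact ⟨Sum.inr j, subset_inter hj (hedgeA e heA)⟩
    · obtain ⟨i, hi⟩ := d1.cover_edge e (Or.inl ⟨he, heA⟩)
      exact ⟨Sum.inl i, subset_inter hi (hedgeB e ⟨he, heA⟩)⟩
  · intro v hS
    rw [SimpleGraph.connected_iff]
    refine ⟨?_, hS.to_subtype⟩
    set G := GlueAux.glue d1.T d2.T i1 i2 with hGdef
    set S : Set (d1.ι ⊕ d2.ι) :=
      {x | v ∈ Sum.elim (fun i => d1.bag i ∩ (contractV Vs E A)) (fun j => d2.bag j ∩ X2) x} with hSdef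
    have r1 : ∀ (hv1 : v ∈ (contractV Vs E A)) (a b : d1.ι) (ha : v ∈ d1.bag a) (hb : v ∈ d1.bag b),
        (G.induce S).Reachable ⟨Sum.inl a, ⟨ha, hv1⟩⟩ ⟨Sum.inl b, ⟨hb, hv1⟩⟩ := by
      intro hv1 a b ha hb
      have hconn := (d1.bag_conn v ⟨a, ha⟩).preconnected ⟨a, ha⟩ ⟨b, hb⟩
      let f1 : (d1.T.induce {i | v ∈ d1.bag i}) →g (G.induce S) :=
        ⟨fun x => ⟨Sum.inl x.1, ⟨x.2, hv1⟩⟩, fun h => h⟩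
      exact hconn.map f1
    have r2 : ∀ (hv2 : v ∈ X2) (a b : d2.ι) (ha : v ∈ d2.bag a) (hb : v ∈ d2.bag b),
        (G.induce S).Reachable ⟨Sum.inr a, ⟨ha, hv2⟩⟩ ⟨Sum.inr b, ⟨hb, hv2⟩⟩ := by
      intro hv2 a b ha hb
      have hconn := (d2.bag_conn v ⟨a, ha⟩).preconnected ⟨a, ha⟩ ⟨b, hb⟩
      let f2 : (d2.T.induce {j | v ∈ d2.bag j}) →g (G.induce S) :=
        ⟨fun x => ⟨Sum.inr x.1, ⟨x.2, hv2⟩⟩, fun h => h⟩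
      exact hconn.map f2
    have rcross : ∀ (hvb : v ∈ border E A),
        (G.induce S).Reachable ⟨Sum.inl i1, ⟨hb1 hvb, hbX1 hvb⟩⟩
          ⟨Sum.inr i2, ⟨hb2' hvb, hbX2 hvb⟩⟩ := by
      intro hvb
      exact SimpleGraph.Adj.reachable (GlueAux.glue_adj_cross d1.T d2.T i1 i2)
    rintro ⟨(a | a), ha⟩ ⟨(b | b), hb⟩
    · exact r1 ha.2 a b ha.1 hb.1
    · have hvb : v ∈ border E A := hX12 ⟨ha.2, hb.2⟩
      exact ((r1 ha.2 a i1 ha.1 (hb1 hvb)).trans (rcross hvb)).trans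
        (r2 hb.2 i2 b (hb2' hvb) hb.1)
    · have hvb : v ∈ border E A := hX12 ⟨hb.2, ha.2⟩
      exact ((r2 ha.2 a i2 ha.1 (hb2' hvb)).trans (rcross hvb).symm).trans
        (r1 hb.2 i1 b (hb1 hvb) hb.1)
    · exact r2 ha.2 a b ha.1 hb.1
  · rw [TreeDecomp.width, iSup_sum]
    apply sup_le
    · refine le_trans (iSup_mono fun i => ?_) (le_max_left d1.width d2.width)
      exact tsub_le_tsub_right (encard_mono inter_subset_left) 1
    · refine le_trans (iSup_mono fun j => ?_) (le_max_right d1.width d2.width)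
      exact tsub_le_tsub_right (encard_mono inter_subset_left) 1

end Glue2


/-- If the border of a bipartition `{A, E \ A}` of the edge set of `H` is
contained in a bag of an optimal tree-decomposition of `H`, then
`tw(H) = max (tw(H/A), tw(H/B))`. -/
theorem tw_eq_max_contractions
    (Vs : Set V) (E A : Set (Set V)) (hE : ∀ e ∈ E, e ⊆ Vs)
    (hA : A ⊆ E) (hAne : A.Nonempty) (hBne : (E \ A).Nonempty)
    (d : TreeDecomp Vs E) (hopt : d.width = tw Vs E)
    (hbag : ∃ i, border E A ⊆ d.bag i) :
    tw Vs E = max (tw (contractV Vs E A) (contractE E A))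
                  (tw (contractV Vs E (E \ A)) (contractE E (E \ A))) := by
  classical
  obtain ⟨i0, hb0⟩ := hbag
  have hb0' : border E (E \ A) ⊆ d.bag i0 := by rw [border_diff]; exact hb0
  have le1 : tw (contractV Vs E A) (contractE E A) ≤ tw Vs E := by
    rw [← hopt]
    exact iInf_le (fun d' : TreeDecomp (contractV Vs E A) (contractE E A) => d'.width)
      (contractDecomp A hE d i0 hb0)
  have le2 : tw (contractV Vs E (E \ A)) (contractE E (E \ A)) ≤ tw Vs E := by
    rw [← hopt]
    exact iInf_le
      (fun d' : TreeDecomp (contractV Vs E (E \ A)) (contractE E (E \ A)) => d'.width)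
      (contractDecomp (E \ A) hE d i0 hb0')
  haveI h1 : Nonempty (TreeDecomp (contractV Vs E A) (contractE E A)) :=
    ⟨contractDecomp A hE d i0 hb0⟩
  haveI h2 : Nonempty (TreeDecomp (contractV Vs E (E \ A)) (contractE E (E \ A))) :=
    ⟨contractDecomp (E \ A) hE d i0 hb0'⟩
  obtain ⟨d1, hd1⟩ := enat_exists_eq_iInf
    (fun d' : TreeDecomp (contractV Vs E A) (contractE E A) => d'.width)
  obtain ⟨d2, hd2⟩ := enat_exists_eq_iInf
    (fun d' : TreeDecomp (contractV Vs E (E \ A)) (contractE E (E \ A)) => d'.width)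
  obtain ⟨D, hD⟩ := exists_glueDecomp hE hA d1 d2
  refine le_antisymm ?_ (max_le le1 le2)
  calc tw Vs E ≤ D.width := iInf_le (fun d' : TreeDecomp Vs E => d'.width) D
    _ ≤ max d1.width d2.width := hD
    _ = _ := by rw [show d1.width = tw (contractV Vs E A) (contractE E A) from hd1,
        show d2.width = tw (contractV Vs E (E \ A)) (contractE E (E \ A)) from hd2]
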